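/- Let δ : [n]×[n] → ℝ satisfy (1/n) Σ_{i,j} δ_{i,j}² ≤ ε, and let F : S_n → ℝ be given by F(π) = Σ_{i=1}^n (δ_{i,π(i)} − (1/n)Σ_j δ_{i,j}). Then E_{π}[F(π)²] ≤ 4(n−1)/n · Σ_{i,j} δ_{i,j}²/n ≤ 4ε, i.e., E[(Σ_{i,j} δ_{i,j}(x_{i,j} − 1/n))²] = O(ε). -/

import Mathlib

open Finset Equiv


lemma sumA {m : ℕ} (g : Fin (m+1) → ℝ) (i : Fin (m+1)) :
    ∑ π : Equiv.Perm (Fin (m+1)), g (π i) = m.factorial * ∑ j, g j := by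
  have h0 : ∑ π : Equiv.Perm (Fin (m+1)), g ((π * Equiv.swap 0 i) i)
      = ∑ π : Equiv.Perm (Fin (m+1)), g (π i) :=
    Equiv.sum_comp (Equiv.mulRight (Equiv.swap 0 i)) (fun π => g (π i))
  simp only [Equiv.Perm.mul_apply, Equiv.swap_apply_right] at h0
  rw [← h0, ← Equiv.sum_comp Equiv.Perm.decomposeFin.symm (fun π => g (π 0))]
  simp only [Fintype.sum_prod_type, Equiv.Perm.decomposeFin_symm_apply_zero,
    Finset.sum_const, Finset.card_univ, Fintype.card_perm, Fintype.card_fin, nsmul_eq_mul]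
  rw [Finset.mul_sum]

lemma sumB {m : ℕ} (h : Fin (m+2) → Fin (m+2) → ℝ) (i k : Fin (m+2)) (hik : i ≠ k) :
    ∑ π : Equiv.Perm (Fin (m+2)), h (π i) (π k)
      = m.factorial * ∑ j, ∑ l ∈ Finset.univ.erase j, h j l := by
  set σ1 := Equiv.swap (0 : Fin (m+2)) i with hσ1
  set τ := Equiv.swap (σ1 k) 1 * σ1 with hτ
  have h01 : (0 : Fin (m+2)) ≠ 1 := by simp
  have hk0 : σ1 k ≠ 0 := by
    intro hc
    apply hik
    have : σ1 k = σ1 i := by rw [hc, hσ1, Equiv.swap_apply_right]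
    exact (σ1.injective this).symm
  have hτi : τ i = 0 := by
    rw [hτ, Equiv.Perm.mul_apply, hσ1, Equiv.swap_apply_right]
    exact Equiv.swap_apply_of_ne_of_ne (Ne.symm hk0) h01
  have hτk : τ k = 1 := by
    rw [hτ, Equiv.Perm.mul_apply, Equiv.swap_apply_left]
  have h0 : ∑ π : Equiv.Perm (Fin (m+2)), h ((π * τ) i) ((π * τ) k)
      = ∑ π : Equiv.Perm (Fin (m+2)), h (π i) (π k) :=
    Equiv.sum_comp (Equiv.mulRight τ) (fun π => h (π i) (π k))
  simp only [Equiv.Perm.mul_apply, hτi, hτk] at h0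
  rw [← h0, ← Equiv.sum_comp Equiv.Perm.decomposeFin.symm (fun π => h (π 0) (π 1))]
  simp only [Fintype.sum_prod_type, Equiv.Perm.decomposeFin_symm_apply_zero,
    Equiv.Perm.decomposeFin_symm_apply_one]
  rw [Finset.mul_sum]
  refine Finset.sum_congr rfl fun j _ => ?_
  rw [sumA (fun x => h j (Equiv.swap 0 j x.succ)) 0]
  congr 1
  have hinj : ∀ x ∈ (Finset.univ : Finset (Fin (m+1))), ∀ y ∈ Finset.univ,
      Equiv.swap (0 : Fin (m+2)) j x.succ = Equiv.swap 0 j y.succ → x = y := by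
    intro x _ y _ hxy
    exact Fin.succ_injective _ ((Equiv.swap 0 j).injective hxy)
  have himg : (Finset.univ : Finset (Fin (m+1))).image
      (fun j' => Equiv.swap (0 : Fin (m+2)) j j'.succ) = Finset.univ.erase j := by
    ext l
    simp only [Finset.mem_image, Finset.mem_univ, true_and, Finset.mem_erase, and_true]
    constructor
    · rintro ⟨j', rfl⟩
      intro hc
      have : j'.succ = Equiv.swap (0 : Fin (m+2)) j j := (Equiv.swap 0 j).injective (by
        rw [hc]; simp [Equiv.swap_apply_left, Equiv.swap_apply_right])
      rw [Equiv.swap_apply_right] at this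
      exact Fin.succ_ne_zero j' this
    · intro hl
      have hne : Equiv.swap (0 : Fin (m+2)) j l ≠ 0 := by
        intro hc
        have := congrArg (Equiv.swap (0 : Fin (m+2)) j) hc
        rw [Equiv.swap_apply_self, Equiv.swap_apply_left] at this
        exact hl this
      obtain ⟨j', hj'⟩ := Fin.exists_succ_eq.mpr hne
      exact ⟨j', by rw [hj', Equiv.swap_apply_self]⟩
  rw [← himg, Finset.sum_image hinj]

lemma hsum_lemma {m : ℕ} (a : Fin (m+2) → Fin (m+2) → ℝ)
    (hrow : ∀ i, ∑ j, a i j = 0) :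
    ∑ π : Equiv.Perm (Fin (m+2)), (∑ i, a i (π i)) ^ 2
      = ((m+1).factorial : ℝ) * (∑ i, ∑ j, a i j ^ 2)
        - (m.factorial : ℝ) * ∑ i, ∑ k ∈ Finset.univ.erase i, ∑ j, a i j * a k j := by
  have e1 : ∀ π : Equiv.Perm (Fin (m+2)), (∑ i, a i (π i)) ^ 2
      = ∑ i, ∑ k, a i (π i) * a k (π k) := by
    intro π; rw [sq, Finset.sum_mul_sum]
  simp only [e1]
  rw [Finset.sum_comm]
  have e2 : ∀ i, ∑ π : Equiv.Perm (Fin (m+2)), ∑ k, a i (π i) * a k (π k)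
      = ∑ k, ∑ π : Equiv.Perm (Fin (m+2)), a i (π i) * a k (π k) :=
    fun i => Finset.sum_comm
  simp only [e2]
  have diag : ∀ i : Fin (m+2), ∑ π : Equiv.Perm (Fin (m+2)), a i (π i) * a i (π i)
      = ((m+1).factorial : ℝ) * ∑ j, a i j ^ 2 := by
    intro i
    have := sumA (m := m+1) (fun x => a i x * a i x) i
    simpa [sq] using this
  have offdiag : ∀ i k : Fin (m+2), i ≠ k →
      ∑ π : Equiv.Perm (Fin (m+2)), a i (π i) * a k (π k)
        = -((m.factorial : ℝ) * ∑ j, a i j * a k j) := by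
    intro i k hik
    rw [sumB (fun x y => a i x * a k y) i k hik]
    have : ∀ j : Fin (m+2), ∑ l ∈ Finset.univ.erase j, a i j * a k l
        = -(a i j * a k j) := by
      intro j
      rw [← Finset.mul_sum, Finset.sum_erase_eq_sub (Finset.mem_univ j), hrow k]
      ring
    simp only [this]
    rw [Finset.sum_neg_distrib, mul_neg]
  have split : ∀ i : Fin (m+2),
      ∑ k, ∑ π : Equiv.Perm (Fin (m+2)), a i (π i) * a k (π k)
        = ((m+1).factorial : ℝ) * ∑ j, a i j ^ 2
          - (m.factorial : ℝ) * ∑ k ∈ Finset.univ.erase i, ∑ j, a i j * a k j := by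
    intro i
    rw [← Finset.add_sum_erase _ _ (Finset.mem_univ i), diag i]
    have : ∀ k ∈ Finset.univ.erase i,
        ∑ π : Equiv.Perm (Fin (m+2)), a i (π i) * a k (π k)
          = -((m.factorial : ℝ) * ∑ j, a i j * a k j) := by
      intro k hk
      exact offdiag i k (Ne.symm (Finset.mem_erase.mp hk).1)
    rw [Finset.sum_congr rfl this]
    rw [Finset.sum_neg_distrib, ← Finset.mul_sum]
    ring
  simp only [split]
  rw [Finset.sum_sub_distrib, ← Finset.mul_sum, ← Finset.mul_sum]


lemma cross_bound {m : ℕ} (a : Fin (m+2) → Fin (m+2) → ℝ) :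
    -(∑ i, ∑ j, a i j ^ 2) ≤ ∑ i, ∑ k ∈ Finset.univ.erase i, ∑ j, a i j * a k j := by
  have key : ∀ (x : Fin (m+2) → ℝ),
      ∑ i, ∑ k ∈ Finset.univ.erase i, x i * x k = (∑ i, x i)^2 - ∑ i, x i ^ 2 := by
    intro x
    have h1 : (∑ i, x i)^2 = ∑ i, ∑ k, x i * x k := by rw [sq, Finset.sum_mul_sum]
    rw [h1, ← Finset.sum_sub_distrib]
    refine Finset.sum_congr rfl fun i _ => ?_
    rw [← Finset.add_sum_erase _ _ (Finset.mem_univ i)]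
    ring
  have swap1 : ∑ i, ∑ k ∈ Finset.univ.erase i, ∑ j, a i j * a k j
      = ∑ j, ∑ i, ∑ k ∈ Finset.univ.erase i, a i j * a k j := by
    have h2 : ∀ i : Fin (m+2), ∑ k ∈ Finset.univ.erase i, ∑ j, a i j * a k j
        = ∑ j, ∑ k ∈ Finset.univ.erase i, a i j * a k j := fun i => Finset.sum_comm
    simp only [h2]
    exact Finset.sum_comm
  rw [swap1]
  have : ∀ j : Fin (m+2), ∑ i, ∑ k ∈ Finset.univ.erase i, a i j * a k j
      = (∑ i, a i j)^2 - ∑ i, a i j ^ 2 := fun j => key (fun i => a i j)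
  simp only [this]
  have swap2 : ∑ i, ∑ j, a i j ^ 2 = ∑ j, ∑ i, a i j ^ 2 := Finset.sum_comm
  rw [swap2, Finset.sum_sub_distrib]
  have : (0:ℝ) ≤ ∑ j, (∑ i, a i j)^2 := by positivity
  linarith

set_option maxHeartbeats 1000000 in
lemma main2 {m : ℕ} (δ : Fin (m+2) → Fin (m+2) → ℝ)
    (F : Equiv.Perm (Fin (m+2)) → ℝ)
    (hF : ∀ π, F π = ∑ i, (δ i (π i) - (1 / ((m+2 : ℕ) : ℝ)) * ∑ j, δ i j)) :
    (∑ π : Equiv.Perm (Fin (m+2)), F π ^ 2) / ((m+2).factorial : ℝ)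
        ≤ 4 * (((m+2:ℕ) : ℝ) - 1) / ((m+2:ℕ):ℝ) * ((∑ i, ∑ j, δ i j ^ 2) / ((m+2:ℕ):ℝ)) := by
  have hnn : ((m+2:ℕ):ℝ) = (m:ℝ) + 2 := by push_cast; ring
  set nn : ℝ := ((m+2:ℕ):ℝ) with hnndef
  have hnpos : (0:ℝ) < nn := by rw [hnn]; positivity
  set a : Fin (m+2) → Fin (m+2) → ℝ := fun i j => δ i j - (1/nn) * ∑ j', δ i j' with ha
  have hrow : ∀ i, ∑ j, a i j = 0 := by
    intro i
    simp only [ha, Finset.sum_sub_distrib, Finset.sum_const, Finset.card_univ,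
      Fintype.card_fin, nsmul_eq_mul]
    rw [← hnndef]
    field_simp
    ring
  have hF2 : ∀ π, F π = ∑ i, a i (π i) := fun π => hF π
  have hsum := hsum_lemma a hrow
  set A := ∑ i, ∑ j, a i j ^ 2 with hAdef
  set S := ∑ i, ∑ j, δ i j ^ 2 with hSdef
  have hA0 : (0:ℝ) ≤ A :=
    Finset.sum_nonneg fun i _ => Finset.sum_nonneg fun j _ => sq_nonneg _
  have hAS : A ≤ S := by
    refine Finset.sum_le_sum fun i _ => ?_
    have expand : ∑ j, a i j ^ 2 = (∑ j, δ i j ^ 2) - (∑ j, δ i j)^2 / nn := by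
      simp only [ha]
      have e : ∀ j : Fin (m+2), (δ i j - 1/nn * ∑ j', δ i j')^2
          = δ i j^2 - 2*(1/nn * ∑ j', δ i j')*δ i j + (1/nn * ∑ j', δ i j')^2 :=
        fun j => by ring
      simp only [e]
      rw [Finset.sum_add_distrib, Finset.sum_sub_distrib, ← Finset.mul_sum,
        Finset.sum_const, Finset.card_univ, Fintype.card_fin, nsmul_eq_mul, ← hnndef]
      field_simp
      ring
    rw [expand]
    have : (0:ℝ) ≤ (∑ j, δ i j)^2 / nn := by positivity
    linarith
  have hT := cross_bound a
  rw [← hAdef] at hT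
  set f0 : ℝ := (m.factorial : ℝ) with hf0def
  have hf0 : (0:ℝ) < f0 := by
    rw [hf0def]; exact_mod_cast Nat.factorial_pos m
  have e1 : ((m+1).factorial : ℝ) = ((m:ℝ)+1) * f0 := by
    rw [hf0def, Nat.factorial_succ]; push_cast; ring
  have e2 : ((m+2).factorial : ℝ) = nn * (((m:ℝ)+1) * f0) := by
    rw [hf0def, hnn, show m+2 = (m+1)+1 from rfl, Nat.factorial_succ, Nat.factorial_succ]
    push_cast; ring
  have hfactpos : (0:ℝ) < ((m+2).factorial : ℝ) := by
    rw [e2]; positivity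
  rw [div_le_iff₀ hfactpos]
  simp only [hF2]
  rw [hsum, e1, e2]
  set T := ∑ i, ∑ k ∈ Finset.univ.erase i, ∑ j, a i j * a k j with hTdef
  have hstep : ((m:ℝ)+1) * f0 * A - f0 * T ≤ ((m:ℝ)+1) * f0 * A + f0 * A := by
    nlinarith [hT, hf0]
  refine le_trans hstep ?_
  have hrhs : 4 * (((m:ℝ)+2) - 1) / ((m:ℝ)+2) * (S / ((m:ℝ)+2)) * (((m:ℝ)+2) * (((m:ℝ)+1) * f0))
      = 4 * ((m:ℝ)+1)^2 * S * f0 / ((m:ℝ)+2) := by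
    have : ((m:ℝ)+2) ≠ 0 := by positivity
    field_simp
    ring
  rw [hnn, hrhs, le_div_iff₀ (by positivity : (0:ℝ) < (m:ℝ)+2)]
  nlinarith [mul_nonneg hf0.le (sub_nonneg.2 hAS), mul_nonneg hf0.le hA0,
    mul_nonneg (mul_nonneg hf0.le hA0) (sq_nonneg (m:ℝ)),
    mul_nonneg (mul_nonneg hf0.le hA0) (Nat.cast_nonneg m : (0:ℝ) ≤ m)]


theorem stmt5 (n : ℕ) (δ : Fin n → Fin n → ℝ) (ε : ℝ)
    (hδ : (1 / (n : ℝ)) * ∑ i, ∑ j, δ i j ^ 2 ≤ ε)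
    (F : Equiv.Perm (Fin n) → ℝ)
    (hF : ∀ π, F π = ∑ i, (δ i (π i) - (1 / (n : ℝ)) * ∑ j, δ i j)) :
    (∑ π : Equiv.Perm (Fin n), F π ^ 2) / (n.factorial : ℝ)
        ≤ 4 * ((n : ℝ) - 1) / n * ((∑ i, ∑ j, δ i j ^ 2) / n) ∧
    4 * ((n : ℝ) - 1) / n * ((∑ i, ∑ j, δ i j ^ 2) / n) ≤ 4 * ε := by
  have hS : (0:ℝ) ≤ ∑ i, ∑ j, δ i j ^ 2 :=
    Finset.sum_nonneg fun i _ => Finset.sum_nonneg fun j _ => sq_nonneg _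
  constructor
  · -- first inequality
    obtain rfl | rfl | ⟨m, rfl⟩ : n = 0 ∨ n = 1 ∨ ∃ m, n = m + 2 := by
      rcases n with _ | _ | m
      · exact Or.inl rfl
      · exact Or.inr (Or.inl rfl)
      · exact Or.inr (Or.inr ⟨m, rfl⟩)
    · -- n = 0
      have hF0 : ∀ π : Equiv.Perm (Fin 0), F π = 0 := by
        intro π; rw [hF]; simp
      simp [hF0]
    · -- n = 1
      have hF0 : ∀ π : Equiv.Perm (Fin 1), F π = 0 := by
        intro π; rw [hF]
        have : π = Equiv.refl (Fin 1) := Subsingleton.elim _ _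
        simp [this, Fin.sum_univ_one]
      simp [hF0]
    · exact main2 δ F hF
  · -- second inequality
    rcases Nat.eq_zero_or_pos n with rfl | hn
    · have hε : (0:ℝ) ≤ ε := by simpa using hδ
      simp [Finset.sum_empty]
      linarith
    · have hn1 : (1:ℝ) ≤ n := by exact_mod_cast hn
      have hn0 : (0:ℝ) < n := by linarith
      set S := ∑ i, ∑ j, δ i j ^ 2 with hSdef
      have hSε : S ≤ n * ε := by
        rw [one_div] at hδ
        calc S = n * ((n:ℝ)⁻¹ * S) := by field_simp
        _ ≤ n * ε := by
          apply mul_le_mul_of_nonneg_left hδ hn0.le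
      rw [div_mul_div_comm, div_le_iff₀ (by positivity : (0:ℝ) < (n:ℝ) * n)]
      nlinarith [mul_nonneg hS (sub_nonneg.2 hn1), mul_le_mul_of_nonneg_left hSε (by positivity : (0:ℝ) ≤ 4*(n:ℝ))]
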